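/- arXiv:1301.4972 — 3 statements merged into one kernel-verified Lean document; each statement's English description precedes it below -/
import Mathlib

section
/- Let c = f^ω(0) be the Chacon word, where f : 0 ↦ 0010, 1 ↦ 1, and let ρ be the order 0 < 1. Then the lexicographically least word in the shift orbit closure of c beginning with 0 is 0·c, and the lexicographically least word beginning with 1 is 10·c. -/
/-- The prefix of length `n` of an infinite word. -/
def wordPrefix {A : Type*} (x : ℕ → A) (n : ℕ) : List A :=
  List.ofFn (fun i : Fin n => x i)

/-- A finite word is a prefix of an infinite word. -/
def IsPrefixOfWord {A : Type*} (w : List A) (x : ℕ → A) : Prop :=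
  wordPrefix x w.length = w

/-- A finite word is a factor of an infinite word. -/
def IsFactor {A : Type*} (w : List A) (x : ℕ → A) : Prop :=
  ∃ i, w = List.ofFn (fun j : Fin w.length => x (i + j))

/-- `y` belongs to the shift orbit closure of `x`. -/
def InOrbitClosure {A : Type*} (y x : ℕ → A) : Prop :=
  ∀ w, IsFactor w y → IsFactor w x

/-- A morphism `A* → B*` applied to a finite word. -/
def applyMorphism {A B : Type*} (f : A → List B) (w : List A) : List B :=
  w.flatMap f

/-- The `n`-th iterate of a morphism applied to a finite word. -/
def applyIter {A : Type*} (f : A → List A) (n : ℕ) (w : List A) : List A :=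
  (applyMorphism f)^[n] w

/-- `y = f(x)` for infinite words: every image of a prefix of `x` is a prefix of `y`. -/
def IsWordImage {A B : Type*} (f : A → List B) (x : ℕ → A) (y : ℕ → B) : Prop :=
  ∀ n, IsPrefixOfWord (applyMorphism f (wordPrefix x n)) y

/-- Prepend a finite word to an infinite word. -/
def prepend {A : Type*} (w : List A) (x : ℕ → A) : ℕ → A :=
  fun n => if h : n < w.length then w.get ⟨n, h⟩ else x (n - w.length)

/-- Strict lexicographic order on infinite words induced by the order `r` on letters. -/
def LexLt {A : Type*} (r : A → A → Prop) (x y : ℕ → A) : Prop :=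
  ∃ n, (∀ i, i < n → x i = y i) ∧ r (x n) (y n)

def LexLe {A : Type*} (r : A → A → Prop) (x y : ℕ → A) : Prop :=
  LexLt r x y ∨ x = y

/-- `l` is the lexicographically least word (w.r.t. `r`) in the shift orbit closure
of `x` beginning with the letter `a`. -/
def IsLeastWord {A : Type*} (r : A → A → Prop) (x : ℕ → A) (a : A) (l : ℕ → A) : Prop :=
  InOrbitClosure l x ∧ l 0 = a ∧ ∀ y, InOrbitClosure y x → y 0 = a → LexLe r l y

/-- `f` is prolongable on `a` (and generates an infinite word from `a`). -/
def IsGenerating {A : Type*} (f : A → List A) (a : A) : Prop :=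
  ∃ s, f a = a :: s ∧ s ≠ [] ∧ ∀ n, applyIter f n s ≠ []

/-- `x` is the pure morphic word `f^ω(a)`. -/
def IsPureMorphic {A : Type*} (f : A → List A) (a : A) (x : ℕ → A) : Prop :=
  x 0 = a ∧ IsGenerating f a ∧ IsWordImage f x x

/-- `x` is a morphic word: the image under a coding of a pure morphic word. -/
def IsMorphic {B : Type*} (x : ℕ → B) : Prop :=
  ∃ (k : ℕ) (g : Fin k → List (Fin k)) (b : Fin k) (c : Fin k → B) (t : ℕ → Fin k),
    IsPureMorphic g b t ∧ x = c ∘ t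

/-- `f ∈ M_x`: each letter `b` has a nonempty "marker" word `p b` such that `f(y)`
begins with `p b` whenever `y ∈ S_x` begins with `b`, and the markers of distinct
letters are prefix-incomparable. -/
def MemM {A B : Type*} (f : A → List B) (x : ℕ → A) : Prop :=
  ∃ p : A → List B, (∀ b, p b ≠ []) ∧
    (∀ (b : A) (y : ℕ → A), InOrbitClosure y x → y 0 = b →
      ∃ n, p b <+: applyMorphism f (wordPrefix y n)) ∧
    (∀ a b : A, a ≠ b → ¬ p a <+: p b ∧ ¬ p b <+: p a)

/-- Every factor occurs infinitely often. -/
def Recurrent {A : Type*} (x : ℕ → A) : Prop :=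
  ∀ w, IsFactor w x → ∀ N, ∃ i, N ≤ i ∧ w = List.ofFn (fun j : Fin w.length => x (i + j))

/-- Ultimately periodic infinite word. -/
def UltimatelyPeriodic {A : Type*} (x : ℕ → A) : Prop :=
  ∃ N p, 0 < p ∧ ∀ n, N ≤ n → x (n + p) = x n

/-- The period-doubling morphism `0 ↦ 01`, `1 ↦ 00`. -/
def pdMorph : Bool → List Bool := fun b => if b then [false, false] else [false, true]

/-- The morphism `0 ↦ 0001`, `1 ↦ 0101`. -/
def gMorph : Bool → List Bool :=
  fun b => if b then [false, true, false, true] else [false, false, false, true]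

/-- The Chacon morphism `0 ↦ 0010`, `1 ↦ 1`. -/
def chMorph : Bool → List Bool := fun b => if b then [true] else [false, false, true, false]

/-- The Rudin–Shapiro morphism `0 ↦ 01`, `1 ↦ 02`, `2 ↦ 31`, `3 ↦ 32`. -/
def rsMorph : Fin 4 → List (Fin 4) := ![[0, 1], [0, 2], [3, 1], [3, 2]]

/-- The Rudin–Shapiro coding `0 ↦ 0`, `1 ↦ 0`, `2 ↦ 1`, `3 ↦ 1`. -/
def rsCoding : Fin 4 → Bool := ![false, false, true, true]

/-- The 2-bit binary representation morphism `0 ↦ 00`, `1 ↦ 01`, `2 ↦ 10`, `3 ↦ 11`. -/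
def hMorph : Fin 4 → List Bool := ![[false, false], [false, true], [true, false], [true, true]]
namespace Stmt13Aux

def S (c : ℕ → Bool) (j : ℕ) : ℕ := (applyMorphism chMorph (wordPrefix c j)).length

lemma wp_zero {A : Type*} (x : ℕ → A) : wordPrefix x 0 = [] := by simp [wordPrefix]

lemma wp_succ {A : Type*} (x : ℕ → A) (n : ℕ) :
    wordPrefix x (n+1) = wordPrefix x n ++ [x n] := by
  simp only [wordPrefix, List.ofFn_succ', List.concat_eq_append, Fin.coe_castSucc,
    Fin.val_last]

lemma wp_len {A : Type*} (x : ℕ → A) (n : ℕ) : (wordPrefix x n).length = n := by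
  simp [wordPrefix]

lemma wp_add {A : Type*} (x : ℕ → A) (a b : ℕ) :
    wordPrefix x (a+b) = wordPrefix x a ++ List.ofFn (fun i : Fin b => x (a + i)) := by
  induction b with
  | zero => simp
  | succ b ih =>
      rw [← Nat.add_assoc, wp_succ, ih, List.ofFn_succ', List.concat_eq_append,
        List.append_assoc]
      simp

lemma S_zero (c : ℕ → Bool) : S c 0 = 0 := by simp [S, wp_zero, applyMorphism]

lemma S_succ (c : ℕ → Bool) (j : ℕ) :
    S c (j+1) = S c j + (chMorph (c j)).length := by
  simp [S, wp_succ, applyMorphism]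

variable {c : ℕ → Bool}

lemma hpre (hc : IsPureMorphic chMorph false c) (n : ℕ) :
    wordPrefix c (S c n) = applyMorphism chMorph (wordPrefix c n) :=
  hc.2.2 n

lemma block (hc : IsPureMorphic chMorph false c) (j : ℕ) :
    List.ofFn (fun i : Fin (chMorph (c j)).length => c (S c j + i)) = chMorph (c j) := by
  have h1 : wordPrefix c (S c (j+1)) = wordPrefix c (S c j) ++ chMorph (c j) := by
    rw [hpre hc, hpre hc, wp_succ]
    simp [applyMorphism]
  have h2 : wordPrefix c (S c (j+1)) =
      wordPrefix c (S c j) ++ List.ofFn (fun i : Fin (chMorph (c j)).length => c (S c j + i)) := by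
    rw [S_succ, wp_add]
  exact (List.append_cancel_left (h2.symm.trans h1))

lemma blk0 (hc : IsPureMorphic chMorph false c) {j : ℕ} (h : c j = false) :
    c (S c j) = false ∧ c (S c j + 1) = false ∧ c (S c j + 2) = true ∧ c (S c j + 3) = false
      ∧ S c (j+1) = S c j + 4 := by
  have hb := block hc j
  rw [h] at hb
  simp only [chMorph, if_neg Bool.false_ne_true, Bool.false_eq_true, if_false] at hb
  have hb' : [c (S c j + 0), c (S c j + 1), c (S c j + 2), c (S c j + 3)]
      = [false, false, true, false] := by
    rw [← hb]
    simp [List.ofFn_succ]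
  simp only [List.cons.injEq, and_true] at hb'
  refine ⟨by simpa using hb'.1, hb'.2.1, hb'.2.2.1, hb'.2.2.2, ?_⟩
  rw [S_succ, h]; simp [chMorph]

lemma blk1 (hc : IsPureMorphic chMorph false c) {j : ℕ} (h : c j = true) :
    c (S c j) = true ∧ S c (j+1) = S c j + 1 := by
  have hb := block hc j
  rw [h] at hb
  simp only [chMorph, if_pos] at hb
  have hb' : [c (S c j + 0)] = [true] := by
    rw [← hb]; simp [List.ofFn_succ]
  simp only [List.cons.injEq, and_true] at hb'
  refine ⟨by simpa using hb', ?_⟩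
  rw [S_succ, h]; simp [chMorph]

lemma first_letter (hc : IsPureMorphic chMorph false c) (j : ℕ) : c (S c j) = c j := by
  cases h : c j with
  | false => exact (blk0 hc h).1
  | true => exact (blk1 hc h).1

lemma c_init (hc : IsPureMorphic chMorph false c) :
    c 0 = false ∧ c 1 = false ∧ c 2 = true ∧ c 3 = false := by
  have h0 := hc.1
  have := blk0 hc h0
  rw [S_zero] at this
  simpa using ⟨h0, this.2.1, this.2.2.1, this.2.2.2.1⟩

lemma S_step_ge (hc : IsPureMorphic chMorph false c) (j : ℕ) : S c j + 1 ≤ S c (j+1) := by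
  cases h : c j with
  | false => rw [(blk0 hc h).2.2.2.2]; omega
  | true => rw [(blk1 hc h).2]

lemma S_add_le (hc : IsPureMorphic chMorph false c) (a b : ℕ) : S c a + b ≤ S c (a+b) := by
  induction b with
  | zero => simp
  | succ b ih =>
      have := S_step_ge hc (a+b)
      have h2 : S c (a + (b+1)) = S c (a+b+1) := by rw [Nat.add_assoc]
      omega

lemma S_ge (hc : IsPureMorphic chMorph false c) (m : ℕ) : m ≤ S c m := by
  have := S_add_le hc 0 m
  rw [S_zero] at this
  simpa using this

lemma S_one (hc : IsPureMorphic chMorph false c) : S c 1 = 4 := by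
  have := (blk0 hc hc.1).2.2.2.2
  rw [S_zero] at this
  simpa using this

lemma S_ge3 (hc : IsPureMorphic chMorph false c) {m : ℕ} (h : 1 ≤ m) : m + 3 ≤ S c m := by
  have h1 := S_add_le hc 1 (m-1)
  rw [S_one hc] at h1
  have : 1 + (m-1) = m := by omega
  rw [this] at h1
  omega

lemma cover (hc : IsPureMorphic chMorph false c) (i : ℕ) :
    ∃ j t, i = S c j + t ∧ t < (chMorph (c j)).length := by
  induction i with
  | zero =>
      refine ⟨0, 0, by rw [S_zero], ?_⟩
      cases h : c 0 <;> simp [chMorph]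
  | succ i ih =>
      obtain ⟨j, t, hi, ht⟩ := ih
      by_cases h : t + 1 < (chMorph (c j)).length
      · exact ⟨j, t+1, by omega, h⟩
      · refine ⟨j+1, 0, ?_, ?_⟩
        · rw [S_succ]; omega
        · cases h : c (j+1) <;> simp [chMorph]

lemma Zlem (hc : IsPureMorphic chMorph false c) (i : ℕ) (h0 : c i = false)
    (h1 : c (i+1) = false) (h2 : c (i+2) = false) :
    ∃ j, S c j = i + 1 ∧ 1 ≤ j ∧ c (j-1) = false := by
  obtain ⟨j, t, hi, ht⟩ := cover hc i
  cases hj : c j with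
  | true =>
      rw [hj] at ht
      simp [chMorph] at ht
      subst ht
      rw [Nat.add_zero] at hi
      rw [hi, first_letter hc] at h0
      rw [hj] at h0; exact absurd h0 (by simp)
  | false =>
      have hb := blk0 hc hj
      rw [hj] at ht
      simp [chMorph] at ht
      interval_cases t
      · rw [Nat.add_zero] at hi; subst hi
        rw [hb.2.2.1] at h2; exact absurd h2 (by simp)
      · subst hi
        have : S c j + 1 + 1 = S c j + 2 := by omega
        rw [this, hb.2.2.1] at h1; exact absurd h1 (by simp)
      · subst hi
        rw [hb.2.2.1] at h0; exact absurd h0 (by simp)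
      · refine ⟨j+1, by omega, by omega, by simpa using hj⟩

/-- Matching an aligned occurrence against the block stream: read letters back. -/
lemma Qlem (hc : IsPureMorphic chMorph false c) :
    ∀ m j k d, S c (k+m) = S c k + d →
    (∀ t, t < d → c (S c j + t) = c (S c k + t)) →
    (∀ t, t < m → c (j+t) = c (k+t)) ∧ S c (j+m) = S c j + d := by
  intro m
  induction m with
  | zero =>
      intro j k d hd _
      have : d = 0 := by rw [Nat.add_zero] at hd; omega
      subst this
      exact ⟨fun t ht => absurd ht (by omega), by simp⟩
  | succ m ih =>
      intro j k d hd hpt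
      have hdpos : 1 ≤ d := by
        have h1 := S_add_le hc k (m+1)
        have h2 : k + (m+1) = k + (m+1) := rfl
        omega
      -- first letters
      have hjk : c j = c k := by
        have h0 := hpt 0 (by omega)
        rw [Nat.add_zero, Nat.add_zero, first_letter hc, first_letter hc] at h0
        exact h0
      have hlenjk : (chMorph (c j)).length = (chMorph (c k)).length := by rw [hjk]
      set L := (chMorph (c k)).length with hL
      have hSj : S c (j+1) = S c j + L := by rw [S_succ, hlenjk]
      have hSk : S c (k+1) = S c k + L := S_succ c k
      have hdL : L ≤ d := by
        have h1 : S c (k+1) + m ≤ S c (k+1+m) := S_add_le hc (k+1) m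
        have h2 : k+1+m = k+(m+1) := by omega
        rw [h2] at h1
        omega
      have hstep : S c ((k+1)+m) = S c (k+1) + (d - L) := by
        have h2 : k+1+m = k+(m+1) := by omega
        rw [h2, hd, hSk]; omega
      have hpt' : ∀ t, t < d - L → c (S c (j+1) + t) = c (S c (k+1) + t) := by
        intro t ht
        have e1 : S c (j+1) + t = S c j + (L + t) := by omega
        have e2 : S c (k+1) + t = S c k + (L + t) := by omega
        rw [e1, e2]
        exact hpt (L+t) (by omega)
      obtain ⟨hmatch, hSfin⟩ := ih (j+1) (k+1) (d-L) hstep hpt'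
      constructor
      · intro t ht
        cases t with
        | zero => simpa using hjk
        | succ t =>
            have e1 : j + (t+1) = (j+1) + t := by omega
            have e2 : k + (t+1) = (k+1) + t := by omega
            rw [e1, e2]
            exact hmatch t (by omega)
      · have e1 : j + (m+1) = (j+1) + m := by omega
        rw [e1, hSfin, hSj]
        omega

/-- Pushing an occurrence down through the morphism. -/
lemma PDlem (hc : IsPureMorphic chMorph false c) :
    ∀ m j k, (∀ t, t < m → c (j+t) = c (k+t)) →
    ∃ d, S c (j+m) = S c j + d ∧ S c (k+m) = S c k + d ∧
      ∀ t, t < d → c (S c j + t) = c (S c k + t) := by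
  intro m
  induction m with
  | zero =>
      intro j k _
      exact ⟨0, by simp, by simp, fun t ht => absurd ht (by omega)⟩
  | succ m ih =>
      intro j k hpt
      have hjk : c j = c k := by simpa using hpt 0 (by omega)
      set L := (chMorph (c k)).length with hL
      have hSj : S c (j+1) = S c j + L := by rw [S_succ, hjk]
      have hSk : S c (k+1) = S c k + L := S_succ c k
      obtain ⟨d, hd1, hd2, hd3⟩ := ih (j+1) (k+1) (fun t ht => by
        have e1 : j + 1 + t = j + (t+1) := by omega
        have e2 : k + 1 + t = k + (t+1) := by omega
        rw [e1, e2]; exact hpt (t+1) (by omega))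
      refine ⟨L + d, ?_, ?_, ?_⟩
      · have e1 : j + (m+1) = (j+1) + m := by omega
        rw [e1, hd1, hSj]; omega
      · have e1 : k + (m+1) = (k+1) + m := by omega
        rw [e1, hd2, hSk]; omega
      · intro t ht
        by_cases htL : t < L
        · -- within the first block: blocks of j and k are identical letterwise
          cases hck : c k with
          | true =>
              have hcj : c j = true := by rw [hjk, hck]
              have hbj := blk1 hc hcj
              have hbk := blk1 hc hck
              have : L = 1 := by rw [hL, hck]; simp [chMorph]
              have ht0 : t = 0 := by omega
              subst ht0
              rw [Nat.add_zero, Nat.add_zero, hbj.1, hbk.1]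
          | false =>
              have hcj : c j = false := by rw [hjk, hck]
              have hbj := blk0 hc hcj
              have hbk := blk0 hc hck
              have hL4 : L = 4 := by rw [hL, hck]; simp [chMorph]
              have ht4 : t < 4 := by omega
              interval_cases t
              · rw [Nat.add_zero, Nat.add_zero, hbj.1, hbk.1]
              · rw [hbj.2.1, hbk.2.1]
              · rw [hbj.2.2.1, hbk.2.2.1]
              · rw [hbj.2.2.2.1, hbk.2.2.2.1]
        · have e1 : S c j + t = S c (j+1) + (t - L) := by omega
          have e2 : S c k + t = S c (k+1) + (t - L) := by omega
          rw [e1, e2]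
          exact hd3 (t-L) (by omega)

/-- Core lemma: if `c k = 1` then `0 · c[0..k) · 0` is not a factor of `c`. -/
lemma CL (hc : IsPureMorphic chMorph false c) :
    ∀ k, c k = true → ∀ i, c i = false → (∀ t, t < k → c (i+1+t) = c t) →
    c (i+1+k) = false → False := by
  intro k
  induction k using Nat.strong_induction_on with
  | _ k IH =>
  intro hk i hi hmid hend
  obtain ⟨hc0, hc1, hc2, hc3⟩ := c_init hc
  have hk2 : 2 ≤ k := by
    rcases Nat.lt_or_ge k 2 with h | h
    · interval_cases k
      · rw [hc0] at hk; exact absurd hk (by simp)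
      · rw [hc1] at hk; exact absurd hk (by simp)
    · exact h
  have hi1 : c (i+1) = false := by
    have := hmid 0 (by omega); rw [Nat.add_zero] at this; rw [this, hc0]
  have hi2 : c (i+2) = false := by
    have := hmid 1 (by omega)
    have e : i + 1 + 1 = i + 2 := by omega
    rw [e] at this; rw [this, hc1]
  obtain ⟨j, hSj, hj1, hjprev⟩ := Zlem hc i hi hi1 hi2
  obtain ⟨m, t, hkm, ht⟩ := cover hc k
  -- the aligned matching hypothesis (valid for any d ≤ k)
  have hmain : ∀ t', t' < S c m → c (S c j + t') = c (S c 0 + t') := by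
    intro t' ht'
    rw [hSj, S_zero, Nat.zero_add]
    have hSmk : S c m ≤ k := by
      cases hcm : c m with
      | true => rw [hcm] at ht; simp [chMorph] at ht; omega
      | false => omega
    exact hmid t' (by omega)
  cases hcm : c m with
  | true =>
      rw [hcm] at ht
      simp [chMorph] at ht
      subst ht
      rw [Nat.add_zero] at hkm
      -- k = S c m
      have hQ := Qlem hc m j 0 (S c m) (by rw [Nat.zero_add, S_zero, Nat.zero_add]) hmain
      obtain ⟨hmatch, hSjm⟩ := hQ
      have hSjm' : S c (j+m) = i + 1 + k := by rw [hSjm, hSj, hkm]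
      have hjm : c (j+m) = false := by
        rw [← first_letter hc, hSjm', hend]
      have hm1 : 1 ≤ m := by
        rcases Nat.eq_zero_or_pos m with h | h
        · subst h; rw [S_zero] at hkm; omega
        · exact h
      have hmk : m < k := by
        have := S_ge3 hc hm1; omega
      refine IH m hmk hcm (j-1) hjprev ?_ ?_
      · intro t' ht'
        have e : j - 1 + 1 + t' = j + t' := by omega
        rw [e]
        have := hmatch t' ht'
        rwa [Nat.zero_add] at this
      · have e : j - 1 + 1 + m = j + m := by omega
        rw [e]; exact hjm
  | false =>
      have hb := blk0 hc hcm
      rw [hcm] at ht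
      simp [chMorph] at ht
      have ht2 : t = 2 := by
        interval_cases t
        · rw [Nat.add_zero] at hkm; rw [hkm, hb.1] at hk; exact absurd hk (by simp)
        · rw [hkm, hb.2.1] at hk; exact absurd hk (by simp)
        · rfl
        · rw [hkm, hb.2.2.2.1] at hk; exact absurd hk (by simp)
      subst ht2
      -- k = S c m + 2
      have hQ := Qlem hc m j 0 (S c m) (by rw [Nat.zero_add, S_zero, Nat.zero_add]) hmain
      obtain ⟨hmatch, hSjm⟩ := hQ
      have hSjm' : S c (j+m) = i + 1 + S c m := by rw [hSjm, hSj]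
      have h1 : c (S c (j+m)) = false := by
        rw [hSjm']
        have := hmid (S c m) (by omega)
        rw [this, hb.1]
      have h3 : c (S c (j+m) + 2) = false := by
        have e : S c (j+m) + 2 = i + 1 + k := by omega
        rw [e, hend]
      cases hjm : c (j+m) with
      | true =>
          rw [(blk1 hc hjm).1] at h1; exact absurd h1 (by simp)
      | false =>
          rw [(blk0 hc hjm).2.2.1] at h3; exact absurd h3 (by simp)

/-- Arbitrary long occurrences of `0 · (prefix of c)` in `c`. -/
lemma M1 (hc : IsPureMorphic chMorph false c) :
    ∀ m, ∃ j, 1 ≤ j ∧ c (j-1) = false ∧ ∀ t, t < m → c (j+t) = c t := by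
  intro m
  induction m using Nat.strong_induction_on with
  | _ m IH =>
  obtain ⟨hc0, hc1, hc2, hc3⟩ := c_init hc
  rcases Nat.lt_or_ge m 2 with h | h
  · refine ⟨1, le_refl 1, by simpa using hc0, ?_⟩
    intro t ht
    have ht0 : t = 0 := by omega
    subst ht0
    rw [Nat.add_zero] at *
    rw [hc1, hc0]
  · obtain ⟨j, hj1, hjprev, hmatch⟩ := IH (m-1) (by omega)
    obtain ⟨d, hd1, hd2, hd3⟩ := PDlem hc (m-1) j 0 (fun t ht => by
      rw [Nat.zero_add]; exact hmatch t ht)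
    rw [Nat.zero_add, S_zero, Nat.zero_add] at hd2
    -- d = S c (m-1) ≥ m
    have hdm : m ≤ d := by
      have := S_ge3 hc (show 1 ≤ m - 1 by omega); omega
    have hSjprev := blk0 hc hjprev
    have hSjj : S c j = S c (j-1) + 4 := by
      have e : j - 1 + 1 = j := by omega
      rw [← e]; exact hSjprev.2.2.2.2
    refine ⟨S c j, by omega, ?_, ?_⟩
    · have e : S c j - 1 = S c (j-1) + 3 := by omega
      rw [e]; exact hSjprev.2.2.2.1
    · intro t ht
      have h0 := hd3 t (by omega)
      rw [S_zero, Nat.zero_add] at h0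
      exact h0

/-- Arbitrary long occurrences of `1 · 0 · (prefix of c)` in `c`. -/
lemma M2 (hc : IsPureMorphic chMorph false c) :
    ∀ m, ∃ i, c i = true ∧ c (i+1) = false ∧ ∀ t, t < m → c (i+2+t) = c t := by
  intro m
  obtain ⟨j, hj1, hjprev, hmatch⟩ := M1 hc m
  obtain ⟨d, hd1, hd2, hd3⟩ := PDlem hc m j 0 (fun t ht => by
    rw [Nat.zero_add]; exact hmatch t ht)
  rw [Nat.zero_add, S_zero, Nat.zero_add] at hd2
  have hdm : m ≤ d := by have := S_ge hc m; omega
  have hSjprev := blk0 hc hjprev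
  have hSjj : S c j = S c (j-1) + 4 := by
    have e : j - 1 + 1 = j := by omega
    rw [← e]; exact hSjprev.2.2.2.2
  refine ⟨S c (j-1) + 2, hSjprev.2.2.1, ?_, ?_⟩
  · have e : S c (j-1) + 2 + 1 = S c (j-1) + 3 := by omega
    rw [e]; exact hSjprev.2.2.2.1
  · intro t ht
    have e : S c (j-1) + 2 + 2 + t = S c j + t := by omega
    rw [e]
    have h0 := hd3 t (by omega)
    rw [S_zero, Nat.zero_add] at h0
    exact h0

lemma factor_of_pointwise {A : Type*} {w : List A} {x : ℕ → A} (i : ℕ)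
    (h : ∀ s (hs : s < w.length), w[s]'hs = x (i + s)) : IsFactor w x := by
  refine ⟨i, ?_⟩
  apply List.ext_getElem (by simp)
  intro s h1 h2
  simp only [List.getElem_ofFn]
  exact h s h1

lemma factor_pointwise {A : Type*} {w : List A} {x : ℕ → A} (h : IsFactor w x) :
    ∃ i, ∀ s (hs : s < w.length), w[s]'hs = x (i + s) := by
  obtain ⟨i, hw⟩ := h
  refine ⟨i, fun s hs => ?_⟩
  have h2 := List.getElem_of_eq hw hs
  rw [h2]
  simp [List.getElem_ofFn]

lemma orbit_prefix {A : Type*} {y x : ℕ → A} (h : InOrbitClosure y x) (m : ℕ) :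
    ∃ i, ∀ s, s < m → y s = x (i + s) := by
  have hf : IsFactor (wordPrefix y m) y := by
    apply factor_of_pointwise 0
    intro s hs
    simp [wordPrefix]
  obtain ⟨i, hpt⟩ := factor_pointwise (h _ hf)
  refine ⟨i, fun s hs => ?_⟩
  have h1 := hpt s (by simpa [wp_len] using hs)
  rw [← h1]
  simp [wordPrefix]

lemma tri {x y : ℕ → Bool} (h : x ≠ y) :
    LexLt (· < ·) x y ∨ LexLt (· < ·) y x := by
  have hne : ∃ n, x n ≠ y n := by
    by_contra hco
    push_neg at hco
    exact h (funext hco)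
  classical
  let n := Nat.find hne
  have hn : x n ≠ y n := Nat.find_spec hne
  have hmin : ∀ i, i < n → x i = y i := fun i hi => by
    have := Nat.find_min hne hi
    simpa using this
  cases hx : x n with
  | false =>
      left
      exact ⟨n, hmin, by rw [hx]; cases hy : y n with
        | false => rw [hx, hy] at hn; exact absurd rfl hn
        | true => simp⟩
  | true =>
      right
      refine ⟨n, fun i hi => (hmin i hi).symm, ?_⟩
      cases hy : y n with
      | false => rw [hx]; simp
      | true => rw [hx, hy] at hn; exact absurd rfl hn

lemma prepend0_zero (c : ℕ → Bool) : prepend [false] c 0 = false := by simp [prepend]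

lemma prepend0_succ (c : ℕ → Bool) (n : ℕ) : prepend [false] c (n+1) = c n := by
  simp [prepend]

lemma prepend10_zero (c : ℕ → Bool) : prepend [true, false] c 0 = true := by simp [prepend]

lemma prepend10_one (c : ℕ → Bool) : prepend [true, false] c 1 = false := by simp [prepend]

lemma prepend10_succ (c : ℕ → Bool) (n : ℕ) : prepend [true, false] c (n+2) = c n := by
  simp [prepend]

lemma orbit0 (hc : IsPureMorphic chMorph false c) : InOrbitClosure (prepend [false] c) c := by
  intro w hwf
  obtain ⟨i, hpt⟩ := factor_pointwise hwf
  cases i with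
  | zero =>
      obtain ⟨j, hj1, hjprev, hmatch⟩ := M1 hc w.length
      apply factor_of_pointwise (j-1)
      intro s hs
      rw [hpt s hs, Nat.zero_add]
      cases s with
      | zero => rw [Nat.add_zero, prepend0_zero, hjprev]
      | succ t =>
          rw [prepend0_succ]
          have e : j - 1 + (t+1) = j + t := by omega
          rw [e]
          exact (hmatch t (by omega)).symm
  | succ i' =>
      apply factor_of_pointwise i'
      intro s hs
      rw [hpt s hs]
      have e : i' + 1 + s = (i' + s) + 1 := by omega
      rw [e, prepend0_succ]

lemma orbit10 (hc : IsPureMorphic chMorph false c) :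
    InOrbitClosure (prepend [true, false] c) c := by
  intro w hwf
  obtain ⟨i, hpt⟩ := factor_pointwise hwf
  match i with
  | 0 =>
      obtain ⟨i₀, h1, h2, hmatch⟩ := M2 hc w.length
      apply factor_of_pointwise i₀
      intro s hs
      rw [hpt s hs, Nat.zero_add]
      match s with
      | 0 => rw [Nat.add_zero, prepend10_zero, h1]
      | 1 => rw [prepend10_one, h2]
      | (t+2) =>
          rw [prepend10_succ]
          have e : i₀ + (t+2) = i₀ + 2 + t := by omega
          rw [e]
          exact (hmatch t (by omega)).symm
  | 1 =>
      obtain ⟨j, hj1, hjprev, hmatch⟩ := M1 hc w.length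
      apply factor_of_pointwise (j-1)
      intro s hs
      rw [hpt s hs]
      match s with
      | 0 => simp only [Nat.add_zero]; rw [prepend10_one, hjprev]
      | (t+1) =>
          have e1 : 1 + (t+1) = t + 2 := by omega
          rw [e1, prepend10_succ]
          have e : j - 1 + (t+1) = j + t := by omega
          rw [e]
          exact (hmatch t (by omega)).symm
  | (i'+2) =>
      apply factor_of_pointwise i'
      intro s hs
      rw [hpt s hs]
      have e : i' + 2 + s = (i' + s) + 2 := by omega
      rw [e, prepend10_succ]

end Stmt13Aux

theorem stmt13 (c : ℕ → Bool) (hc : IsPureMorphic chMorph false c) :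
    IsLeastWord (· < ·) c false (prepend [false] c) ∧
    IsLeastWord (· < ·) c true (prepend [true, false] c) := by
  open Stmt13Aux in
  constructor
  · refine ⟨Stmt13Aux.orbit0 hc, Stmt13Aux.prepend0_zero c, ?_⟩
    intro y hy hy0
    by_cases heq : prepend [false] c = y
    · exact Or.inr heq
    · left
      rcases Stmt13Aux.tri heq with h | h
      · exact h
      · exfalso
        obtain ⟨n, hag, hlt⟩ := h
        rw [Bool.lt_iff] at hlt
        obtain ⟨hyn, hln⟩ := hlt
        have hn1 : 1 ≤ n := by
          rcases Nat.eq_zero_or_pos n with h0 | h0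
          · subst h0
            rw [Stmt13Aux.prepend0_zero] at hln
            exact absurd hln (by simp)
          · exact h0
        have hcn : c (n-1) = true := by
          have e : n = (n-1) + 1 := by omega
          rw [e, Stmt13Aux.prepend0_succ] at hln
          exact hln
        obtain ⟨i, hocc⟩ := Stmt13Aux.orbit_prefix hy (n+1)
        refine Stmt13Aux.CL hc (n-1) hcn i ?_ ?_ ?_
        · have h0 := hocc 0 (by omega)
          rw [Nat.add_zero] at h0
          rw [← h0, hy0]
        · intro t ht
          have e : i + 1 + t = i + (1 + t) := by omega
          rw [e, ← hocc (1+t) (by omega), hag (1+t) (by omega)]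
          have e2 : 1 + t = t + 1 := by omega
          rw [e2, Stmt13Aux.prepend0_succ]
        · have e : i + 1 + (n-1) = i + n := by omega
          rw [e, ← hocc n (by omega)]
          exact hyn
  · refine ⟨Stmt13Aux.orbit10 hc, Stmt13Aux.prepend10_zero c, ?_⟩
    intro y hy hy0
    by_cases heq : prepend [true, false] c = y
    · exact Or.inr heq
    · left
      rcases Stmt13Aux.tri heq with h | h
      · exact h
      · exfalso
        obtain ⟨n, hag, hlt⟩ := h
        rw [Bool.lt_iff] at hlt
        obtain ⟨hyn, hln⟩ := hlt
        have hn2 : 2 ≤ n := by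
          match n, hyn, hln with
          | 0, hyn, hln => rw [hy0] at hyn; exact absurd hyn (by simp)
          | 1, hyn, hln =>
              rw [Stmt13Aux.prepend10_one] at hln; exact absurd hln (by simp)
          | (n+2), _, _ => omega
        have hcn : c (n-2) = true := by
          have e : n = (n-2) + 2 := by omega
          rw [e, Stmt13Aux.prepend10_succ] at hln
          exact hln
        obtain ⟨i, hocc⟩ := Stmt13Aux.orbit_prefix hy (n+1)
        refine Stmt13Aux.CL hc (n-2) hcn (i+1) ?_ ?_ ?_
        · rw [← hocc 1 (by omega), hag 1 (by omega), Stmt13Aux.prepend10_one]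
        · intro t ht
          have e : i + 1 + 1 + t = i + (2 + t) := by omega
          rw [e, ← hocc (2+t) (by omega), hag (2+t) (by omega)]
          have e2 : 2 + t = t + 2 := by omega
          rw [e2, Stmt13Aux.prepend10_succ]
        · have e : i + 1 + 1 + (n-2) = i + n := by omega
          rw [e, ← hocc n (by omega)]
          exact hyn
end

section
/- Let u = f^ω(0), where f is the morphism on {0,1,2,3} given by 0 ↦ 01, 1 ↦ 02, 2 ↦ 31, 3 ↦ 32, and let ρ be the natural order 0 < 1 < 2 < 3. Then u itself is the lexicographically least word in its shift orbit closure beginning with 0. -/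
/-- first letters of rsMorph images -/
def rsm0 : Fin 4 → Fin 4 := ![0, 0, 3, 3]
/-- second letters of rsMorph images -/
def rsm1 : Fin 4 → Fin 4 := ![1, 2, 1, 2]

lemma rs_len (a : Fin 4) : (rsMorph a).length = 2 := by fin_cases a <;> rfl

lemma rs_decomp (a : Fin 4) : rsMorph a = [rsm0 a, rsm1 a] := by
  fin_cases a <;> rfl

lemma len_applyRs (l : List (Fin 4)) :
    (applyMorphism rsMorph l).length = 2 * l.length := by
  induction l with
  | nil => rfl
  | cons a t ih =>
    simp only [applyMorphism, List.flatMap_cons, List.length_append,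
      List.length_cons] at *
    rw [ih, rs_len]; omega

lemma wp_len {A : Type*} (x : ℕ → A) (n : ℕ) : (wordPrefix x n).length = n := by
  simp [wordPrefix]

lemma prefix2 {u : ℕ → Fin 4} (hu : IsPureMorphic rsMorph 0 u) (n : ℕ) :
    wordPrefix u (2 * n) = applyMorphism rsMorph (wordPrefix u n) := by
  have h := hu.2.2 n
  unfold IsPrefixOfWord at h
  rwa [len_applyRs, wp_len] at h

lemma block {u : ℕ → Fin 4} (hu : IsPureMorphic rsMorph 0 u) (k : ℕ) :
    u (2 * k) = rsm0 (u k) ∧ u (2 * k + 1) = rsm1 (u k) := by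
  have h := prefix2 hu (k + 1)
  have hsplit : wordPrefix u (k + 1)
      = wordPrefix u k ++ [u k] := by
    simp only [wordPrefix, List.ofFn_succ', List.concat_eq_append,
      Fin.coe_castSucc, Fin.val_last]
  rw [hsplit] at h
  have h2 : wordPrefix u (2 * (k + 1))
      = applyMorphism rsMorph (wordPrefix u k) ++ [rsm0 (u k), rsm1 (u k)] := by
    rw [h]
    simp [applyMorphism, rs_decomp]
  have hlen : (applyMorphism rsMorph (wordPrefix u k)).length = 2 * k := by
    rw [len_applyRs, wp_len]
  constructor
  · have h3 := congrArg (fun l => l[2 * k]?) h2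
    rw [List.getElem?_append_right hlen.le, hlen, Nat.sub_self] at h3
    simp only [wordPrefix, List.getElem?_ofFn, List.ofFnNthVal] at h3
    rw [dif_pos (show 2 * k < 2 * (k + 1) by omega)] at h3
    simpa using h3
  · have h3 := congrArg (fun l => l[2 * k + 1]?) h2
    rw [List.getElem?_append_right (by omega), hlen,
      show 2 * k + 1 - 2 * k = 1 by omega] at h3
    simp only [wordPrefix, List.getElem?_ofFn, List.ofFnNthVal] at h3
    rw [dif_pos (show 2 * k + 1 < 2 * (k + 1) by omega)] at h3
    simpa using h3

lemma zero_even {u : ℕ → Fin 4} (hu : IsPureMorphic rsMorph 0 u) {i : ℕ}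
    (hi : u i = 0) : ∃ t, i = 2 * t ∧ (u t = 0 ∨ u t = 1) := by
  rcases Nat.even_or_odd i with ⟨t, ht⟩ | ⟨t, ht⟩
  · refine ⟨t, by omega, ?_⟩
    have hb := (block hu t).1
    rw [show 2 * t = i by omega, hi] at hb
    exact (by decide : ∀ a : Fin 4, (0 : Fin 4) = rsm0 a → a = 0 ∨ a = 1) _ hb
  · exfalso
    have hb := (block hu t).2
    rw [show 2 * t + 1 = i by omega, hi] at hb
    exact (by decide : ∀ a : Fin 4, (0 : Fin 4) ≠ rsm1 a) _ hb

lemma key {u : ℕ → Fin 4} (hu : IsPureMorphic rsMorph 0 u) :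
    ∀ n i, u i = 0 →
      (∀ k < n, u k = u (i + k)) ∨
      (∃ j < n, (∀ k < j, u k = u (i + k)) ∧ u j < u (i + j)) := by
  intro n
  induction n using Nat.strong_induction_on with
  | _ n IH =>
  intro i hi
  rcases Nat.eq_zero_or_pos n with rfl | hn
  · left; exact fun k hk => absurd hk (Nat.not_lt_zero k)
  obtain ⟨t, rfl, ht⟩ := zero_even hu hi
  have hblk : ∀ k, u (2 * t + 2 * k) = rsm0 (u (t + k)) ∧
      u (2 * t + 2 * k + 1) = rsm1 (u (t + k)) := by
    intro k
    have := block hu (t + k)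
    rwa [show 2 * (t + k) = 2 * t + 2 * k by ring] at this
  have hu1 : u 1 = rsm1 (u 0) := by
    have := (block hu 0).2; simpa using this
  rcases Nat.lt_or_ge n 2 with hn1 | hn2
  · -- n = 1
    left
    intro k hk
    have : k = 0 := by omega
    subst this
    rw [Nat.add_zero, hi, hu.1]
  rcases ht with ht0 | ht1
  · -- u t = 0 : use IH at scale (n+1)/2
    set m := (n + 1) / 2 with hm
    have hmn : m < n := by omega
    rcases IH m hmn t ht0 with hagr | ⟨j, hj, hjag, hjlt⟩
    · left
      intro r hr
      have hn2m : n ≤ 2 * m := by omega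
      rcases Nat.even_or_odd r with ⟨k, hk⟩ | ⟨k, hk⟩
      · have hkm : k < m := by omega
        calc u r = rsm0 (u k) := by
              rw [show r = 2 * k by omega]; exact (block hu k).1
          _ = rsm0 (u (t + k)) := by rw [hagr k hkm]
          _ = u (2 * t + r) := by
              rw [show 2 * t + r = 2 * t + 2 * k by omega]
              exact ((hblk k).1).symm
      · have hkm : k < m := by omega
        calc u r = rsm1 (u k) := by
              rw [show r = 2 * k + 1 by omega]; exact (block hu k).2
          _ = rsm1 (u (t + k)) := by rw [hagr k hkm]
          _ = u (2 * t + r) := by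
              rw [show 2 * t + r = 2 * t + 2 * k + 1 by omega]
              exact ((hblk k).2).symm
    · -- first block difference at j
      have hagree2j : ∀ k < 2 * j, u k = u (2 * t + k) := by
        intro r hr
        rcases Nat.even_or_odd r with ⟨k, hk⟩ | ⟨k, hk⟩
        · rw [show r = 2 * k by omega, (block hu k).1,
            show 2 * t + 2 * k = 2 * t + 2 * k by rfl, (hblk k).1,
            hjag k (by omega)]
        · rw [show r = 2 * k + 1 by omega,
            show 2 * t + (2 * k + 1) = 2 * t + 2 * k + 1 by ring,
            (block hu k).2, (hblk k).2, hjag k (by omega)]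
      by_cases h0 : rsm0 (u j) = rsm0 (u (t + j))
      · -- strict difference at 2j+1 (or beyond window ⇒ agree)
        have h1lt : rsm1 (u j) < rsm1 (u (t + j)) :=
          (by decide : ∀ a b : Fin 4, a < b → rsm0 a = rsm0 b → rsm1 a < rsm1 b)
            _ _ hjlt h0
        have hagree2j1 : ∀ k < 2 * j + 1, u k = u (2 * t + k) := by
          intro k hk
          rcases Nat.lt_or_ge k (2 * j) with h | h
          · exact hagree2j k h
          · have : k = 2 * j := by omega
            subst this
            rw [(block hu j).1, (hblk j).1, h0]
        rcases Nat.lt_or_ge (2 * j + 1) n with hlt | hge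
        · right
          refine ⟨2 * j + 1, hlt, hagree2j1, ?_⟩
          rw [(block hu j).2,
            show 2 * t + (2 * j + 1) = 2 * t + 2 * j + 1 by ring, (hblk j).2]
          exact h1lt
        · left
          intro k hk
          exact hagree2j1 k (by omega)
      · -- strict difference at 2j
        have h0lt : rsm0 (u j) < rsm0 (u (t + j)) :=
          (by decide : ∀ a b : Fin 4, a < b → rsm0 a ≠ rsm0 b → rsm0 a < rsm0 b)
            _ _ hjlt h0
        right
        refine ⟨2 * j, by omega, hagree2j, ?_⟩
        rw [(block hu j).1, (hblk j).1]
        exact h0lt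
  · -- u t = 1 : difference at position 1
    right
    refine ⟨1, by omega, ?_, ?_⟩
    · intro k hk
      have : k = 0 := by omega
      subst this
      rw [Nat.add_zero, hi, hu.1]
    · have h2 := (hblk 0).2
      simp only [Nat.mul_zero, Nat.add_zero] at h2
      rw [hu1, h2, hu.1, ht1]
      decide

lemma factor_pref {A : Type*} (x : ℕ → A) (n : ℕ) : IsFactor (wordPrefix x n) x := by
  refine ⟨0, ?_⟩
  apply List.ext_getElem <;> simp [wordPrefix]

theorem stmt16 (u : ℕ → Fin 4) (hu : IsPureMorphic rsMorph 0 u) :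
    IsLeastWord (· < ·) u 0 u := by
  refine ⟨fun w h => h, hu.1, ?_⟩
  intro y hy hy0
  by_cases heq : u = y
  · right; exact heq
  · left
    have hne : ∃ n, u n ≠ y n := by
      by_contra h
      push_neg at h
      exact heq (funext h)
    classical
    let m := Nat.find hne
    have hm : u m ≠ y m := Nat.find_spec hne
    have hmin : ∀ k < m, u k = y k := fun k hk => by
      simpa using Nat.find_min hne hk
    obtain ⟨i, hiw⟩ := hy _ (factor_pref y (m + 1))
    have hyi : ∀ k, k < m + 1 → y k = u (i + k) := by
      intro k hk
      have := congrArg (fun l => l[k]?) hiw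
      simp only [wordPrefix, List.getElem?_ofFn, List.ofFnNthVal,
        List.length_ofFn] at this
      rw [dif_pos hk] at this
      rw [dif_pos (by simpa [wordPrefix] using hk)] at this
      simpa using this
    have hi0 : u i = 0 := by
      have := hyi 0 (by omega)
      rw [Nat.add_zero] at this
      rw [← this, hy0]
    rcases key hu (m + 1) i hi0 with hagr | ⟨j, hj, hjag, hjlt⟩
    · exact absurd ((hagr m (by omega)).trans (hyi m (by omega)).symm) hm
    · exact ⟨j, fun k hk => (hjag k hk).trans (hyi k (by omega)).symm,
        by rw [← hyi j (by omega)] at hjlt; exact hjlt⟩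
end

section
/- Let w be the Rudin–Shapiro word, defined as w = g(f^ω(0)) where f : 0 ↦ 01, 1 ↦ 02, 2 ↦ 31, 3 ↦ 32 and g is the coding 0 ↦ 0, 1 ↦ 0, 2 ↦ 1, 3 ↦ 1. Then the lexicographically least word (with respect to 0 < 1) in the shift orbit closure of w is 0·w. -/
namespace Stmt17Aux

def rsF0 : Fin 4 → Fin 4 := ![0, 0, 3, 3]
def rsF1 : Fin 4 → Fin 4 := ![1, 2, 1, 2]

structure RSRec (u : ℕ → Fin 4) : Prop where
  h0 : u 0 = 0
  e0 : ∀ k, u (2*k) = rsF0 (u k)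
  e1 : ∀ k, u (2*k+1) = rsF1 (u k)

lemma rsMorph_eq : ∀ a : Fin 4, rsMorph a = [rsF0 a, rsF1 a] := by decide

lemma rsF1_ne_zero : ∀ a : Fin 4, rsF1 a ≠ 0 := by decide
lemma rsF1_mem : ∀ a : Fin 4, rsF1 a = 1 ∨ rsF1 a = 2 := by decide
lemma rs_monoF : ∀ a b : Fin 4, a < b →
    rsF0 a < rsF0 b ∨ (rsF0 a = rsF0 b ∧ rsF1 a < rsF1 b) := by decide
lemma rs_monoG : ∀ a b : Fin 4, a < b →
    (rsCoding (rsF0 a) < rsCoding (rsF0 b)) ∨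
      (rsCoding (rsF0 a) = rsCoding (rsF0 b) ∧ rsCoding (rsF1 a) < rsCoding (rsF1 b)) := by
  decide
lemma coding0_cases : ∀ a : Fin 4, rsCoding (rsF0 a) = false → a = 0 ∨ a = 1 := by decide

/-- lexicographic `≤` on length-`n` windows. -/
def SegLe {A : Type*} [LT A] (x y : ℕ → A) (n : ℕ) : Prop :=
  (∀ j, j < n → x j = y j) ∨ ∃ m, m < n ∧ (∀ j, j < m → x j = y j) ∧ x m < y m

lemma isFactor_mk {A : Type*} (x : ℕ → A) (z : List A) (i : ℕ)
    (hp : ∀ j (hj : j < z.length), z[j] = x (i+j)) : IsFactor z x := by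
  refine ⟨i, List.ext_getElem (by simp) fun j h1 h2 => ?_⟩
  rw [List.getElem_ofFn]
  exact hp j h1

lemma isFactor_elim {A : Type*} {x : ℕ → A} {z : List A} (h : IsFactor z x) :
    ∃ i, ∀ j (hj : j < z.length), z[j] = x (i+j) := by
  obtain ⟨i, hi⟩ := h
  refine ⟨i, fun j hj => ?_⟩
  rw [List.getElem_of_eq hi hj, List.getElem_ofFn]

variable {u : ℕ → Fin 4}

lemma even_of_zero (h : RSRec u) {m : ℕ} (hm : u m = 0) : ∃ t, m = 2*t := by
  rcases Nat.even_or_odd m with ⟨t, ht⟩ | ⟨t, ht⟩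
  · exact ⟨t, by omega⟩
  · exfalso
    have h1 := h.e1 t
    rw [show 2*t+1 = m by omega, hm] at h1
    exact rsF1_ne_zero (u t) h1.symm

lemma succ_of_zero (h : RSRec u) {m : ℕ} (hm : u m = 0) : u (m+1) = 1 ∨ u (m+1) = 2 := by
  obtain ⟨t, rfl⟩ := even_of_zero h hm
  rw [h.e1 t]
  exact rsF1_mem _

lemma hu1 (h : RSRec u) : u 1 = 1 := by
  have h1 : u (2*0+1) = rsF1 (u 0) := h.e1 0
  rw [h.h0] at h1
  exact h1.trans (by decide)

lemma hu2 (h : RSRec u) : u 2 = 0 := by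
  have h1 : u (2*1) = rsF0 (u 1) := h.e0 1
  rw [hu1 h] at h1
  exact h1.trans (by decide)

lemma blocks_eq (h : RSRec u) {t m : ℕ} (hb : ∀ q, q < m → u q = u (t+q)) :
    ∀ j, j < 2*m → u j = u (2*t+j) := by
  intro j hj
  rcases Nat.even_or_odd j with ⟨q, hq⟩ | ⟨q, hq⟩
  · have hj2 : j = 2*q := by omega
    subst hj2
    rw [h.e0 q, show 2*t+2*q = 2*(t+q) by ring, h.e0 (t+q), hb q (by omega)]
  · have hj2 : j = 2*q+1 := by omega
    subst hj2
    rw [h.e1 q, show 2*t+(2*q+1) = 2*(t+q)+1 by ring, h.e1 (t+q), hb q (by omega)]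

lemma segle_U (h : RSRec u) : ∀ n k, SegLe u (fun j => u (k+j)) n := by
  intro n
  induction n using Nat.strong_induction_on with
  | _ n IH =>
  intro k
  rcases Nat.eq_zero_or_pos n with rfl | hn
  · exact Or.inl (fun j hj => absurd hj (by omega))
  by_cases hk : u k = 0
  · obtain ⟨t, rfl⟩ := even_of_zero h hk
    rcases Nat.lt_or_ge n 2 with hn1 | hn2
    · left
      intro j hj
      have hj0 : j = 0 := by omega
      subst hj0
      show u 0 = u (2*t+0)
      rw [Nat.add_zero, h.h0, hk]
    · have hmn : (n+1)/2 < n := by omega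
      rcases IH ((n+1)/2) hmn t with heq | ⟨m', hm', hbef, hstr⟩
      · exact Or.inl fun j hj => blocks_eq h (fun q hq => heq q hq) j (by omega)
      · have hstr' : u m' < u (t+m') := hstr
        rcases rs_monoF (u m') (u (t+m')) hstr' with hlt | ⟨heq0, hlt1⟩
        · right
          refine ⟨2*m', by omega, fun j hj => blocks_eq h (fun q hq => hbef q hq) j hj, ?_⟩
          show u (2*m') < u (2*t+2*m')
          rw [h.e0 m', show 2*t+2*m' = 2*(t+m') by ring, h.e0 (t+m')]
          exact hlt
        · have hA : u (2*m') = u (2*t+2*m') := by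
            rw [h.e0 m', show 2*t+2*m' = 2*(t+m') by ring, h.e0 (t+m')]
            exact heq0
          by_cases hlast : 2*m'+1 < n
          · right
            refine ⟨2*m'+1, hlast, ?_, ?_⟩
            · intro j hj
              rcases Nat.lt_or_ge j (2*m') with hj' | hj'
              · exact blocks_eq h (fun q hq => hbef q hq) j hj'
              · have hj0 : j = 2*m' := by omega
                subst hj0
                exact hA
            · show u (2*m'+1) < u (2*t+(2*m'+1))
              rw [h.e1 m', show 2*t+(2*m'+1) = 2*(t+m')+1 by ring, h.e1 (t+m')]
              exact hlt1
          · left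
            intro j hj
            rcases Nat.lt_or_ge j (2*m') with hj' | hj'
            · exact blocks_eq h (fun q hq => hbef q hq) j hj'
            · have hj0 : j = 2*m' := by omega
              subst hj0
              exact hA
  · right
    refine ⟨0, hn, fun j hj => absurd hj (by omega), ?_⟩
    show u 0 < u (k+0)
    rw [Nat.add_zero, h.h0]
    have hval : (u k).val ≠ 0 := fun hc => hk (Fin.ext hc)
    exact Fin.lt_def.mpr (by omega)

lemma segle_W (h : RSRec u) (n t : ℕ) :
    SegLe (fun j => rsCoding (u j)) (fun j => rsCoding (u (2*t+j))) n := by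
  rcases Nat.eq_zero_or_pos n with rfl | hn
  · exact Or.inl (fun j hj => absurd hj (by omega))
  rcases segle_U h ((n+1)/2) t with heq | ⟨m', hm', hbef, hstr⟩
  · exact Or.inl fun j hj =>
      congrArg rsCoding (blocks_eq h (fun q hq => heq q hq) j (by omega))
  · have hstr' : u m' < u (t+m') := hstr
    rcases rs_monoG (u m') (u (t+m')) hstr' with hlt | ⟨heq0, hlt1⟩
    · right
      refine ⟨2*m', by omega,
        fun j hj => congrArg rsCoding (blocks_eq h (fun q hq => hbef q hq) j hj), ?_⟩
      show rsCoding (u (2*m')) < rsCoding (u (2*t+2*m'))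
      rw [h.e0 m', show 2*t+2*m' = 2*(t+m') by ring, h.e0 (t+m')]
      exact hlt
    · have hA : rsCoding (u (2*m')) = rsCoding (u (2*t+2*m')) := by
        rw [h.e0 m', show 2*t+2*m' = 2*(t+m') by ring, h.e0 (t+m')]
        exact heq0
      by_cases hlast : 2*m'+1 < n
      · right
        refine ⟨2*m'+1, hlast, ?_, ?_⟩
        · intro j hj
          rcases Nat.lt_or_ge j (2*m') with hj' | hj'
          · exact congrArg rsCoding (blocks_eq h (fun q hq => hbef q hq) j hj')
          · have hj0 : j = 2*m' := by omega
            subst hj0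
            exact hA
        · show rsCoding (u (2*m'+1)) < rsCoding (u (2*t+(2*m'+1)))
          rw [h.e1 m', show 2*t+(2*m'+1) = 2*(t+m')+1 by ring, h.e1 (t+m')]
          exact hlt1
      · left
        intro j hj
        rcases Nat.lt_or_ge j (2*m') with hj' | hj'
        · exact congrArg rsCoding (blocks_eq h (fun q hq => hbef q hq) j hj')
        · have hj0 : j = 2*m' := by omega
          subst hj0
          exact hA

lemma segle_P (h : RSRec u) (n i : ℕ) :
    SegLe (prepend [false] (rsCoding ∘ u)) (fun j => rsCoding (u (i+j))) n := by
  have hp0 : prepend [false] (rsCoding ∘ u) 0 = false := rfl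
  have hpS : ∀ j, prepend [false] (rsCoding ∘ u) (j+1) = rsCoding (u j) := by
    intro j
    simp [prepend, Function.comp]
  rcases Nat.eq_zero_or_pos n with rfl | hn
  · exact Or.inl (fun j hj => absurd hj (by omega))
  by_cases hwi : rsCoding (u i) = false
  · rcases Nat.even_or_odd i with ⟨k, hk⟩ | ⟨k, hk⟩
    · obtain rfl : i = 2*k := by omega
      have hwi' : rsCoding (rsF0 (u k)) = false := by rw [← h.e0 k]; exact hwi
      have hE0 : prepend [false] (rsCoding ∘ u) 0 = rsCoding (u (2*k+0)) := by
        rw [Nat.add_zero, hp0, hwi]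
      rcases coding0_cases (u k) hwi' with hk0 | hk1
      · -- u k = 0
        have hE1 : prepend [false] (rsCoding ∘ u) 1 = rsCoding (u (2*k+1)) := by
          have e1 : prepend [false] (rsCoding ∘ u) 1 = rsCoding (u 0) := hpS 0
          rw [e1, h.h0, h.e1 k, hk0]
          decide
        rcases succ_of_zero h hk0 with h1 | h2
        · -- u (k+1) = 1
          have hE2 : prepend [false] (rsCoding ∘ u) 2 = rsCoding (u (2*k+2)) := by
            have e2 : prepend [false] (rsCoding ∘ u) 2 = rsCoding (u 1) := hpS 1
            rw [e2, hu1 h, show 2*k+2 = 2*(k+1) by ring, h.e0 (k+1), h1]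
            decide
          have hEs : ∀ j, j < 3 → prepend [false] (rsCoding ∘ u) j = rsCoding (u (2*k+j)) := by
            intro j hj
            interval_cases j
            · exact hE0
            · exact hE1
            · exact hE2
          rcases Nat.lt_or_ge n 4 with hn3 | hn4
          · exact Or.inl fun j hj => hEs j (by omega)
          · right
            refine ⟨3, by omega, fun j hj => hEs j (by omega), ?_⟩
            show prepend [false] (rsCoding ∘ u) 3 < rsCoding (u (2*k+3))
            have e3 : prepend [false] (rsCoding ∘ u) 3 = rsCoding (u 2) := hpS 2
            rw [e3, hu2 h, show 2*k+3 = 2*(k+1)+1 by ring, h.e1 (k+1), h1]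
            decide
        · -- u (k+1) = 2
          rcases Nat.lt_or_ge n 3 with hn2 | hn3
          · refine Or.inl fun j hj => ?_
            have hj01 : j = 0 ∨ j = 1 := by omega
            rcases hj01 with rfl | rfl
            · exact hE0
            · exact hE1
          · right
            refine ⟨2, by omega, ?_, ?_⟩
            · intro j hj
              interval_cases j
              · exact hE0
              · exact hE1
            · show prepend [false] (rsCoding ∘ u) 2 < rsCoding (u (2*k+2))
              have e2 : prepend [false] (rsCoding ∘ u) 2 = rsCoding (u 1) := hpS 1
              rw [e2, hu1 h, show 2*k+2 = 2*(k+1) by ring, h.e0 (k+1), h2]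
              decide
      · -- u k = 1
        rcases Nat.lt_or_ge n 2 with hn1 | hn2
        · refine Or.inl fun j hj => ?_
          have hj0 : j = 0 := by omega
          subst hj0
          exact hE0
        · right
          refine ⟨1, by omega, ?_, ?_⟩
          · intro j hj
            have hj0 : j = 0 := by omega
            subst hj0
            exact hE0
          · show prepend [false] (rsCoding ∘ u) 1 < rsCoding (u (2*k+1))
            have e1 : prepend [false] (rsCoding ∘ u) 1 = rsCoding (u 0) := hpS 0
            rw [e1, h.h0, h.e1 k, hk1]
            decide
    · obtain rfl : i = 2*k+1 := by omega
      have hE0 : prepend [false] (rsCoding ∘ u) 0 = rsCoding (u (2*k+1+0)) := by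
        rw [Nat.add_zero, hp0, hwi]
      rcases segle_W h (n-1) (k+1) with heq | ⟨m', hm', hbef, hstr⟩
      · refine Or.inl fun j hj => ?_
        rcases Nat.eq_zero_or_pos j with rfl | hj0
        · exact hE0
        · obtain ⟨q, rfl⟩ : ∃ q, j = q+1 := ⟨j-1, by omega⟩
          have hq : rsCoding (u q) = rsCoding (u (2*(k+1)+q)) := heq q (by omega)
          rw [hpS q, hq, show 2*(k+1)+q = 2*k+1+(q+1) by ring]
      · right
        refine ⟨m'+1, by omega, ?_, ?_⟩
        · intro j hj
          rcases Nat.eq_zero_or_pos j with rfl | hj0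
          · exact hE0
          · obtain ⟨q, rfl⟩ : ∃ q, j = q+1 := ⟨j-1, by omega⟩
            have hq : rsCoding (u q) = rsCoding (u (2*(k+1)+q)) := hbef q (by omega)
            rw [hpS q, hq, show 2*(k+1)+q = 2*k+1+(q+1) by ring]
        · show prepend [false] (rsCoding ∘ u) (m'+1) < rsCoding (u (2*k+1+(m'+1)))
          have hq : rsCoding (u m') < rsCoding (u (2*(k+1)+m')) := hstr
          rw [hpS m', show 2*k+1+(m'+1) = 2*(k+1)+m' by ring]
          exact hq
  · right
    refine ⟨0, hn, fun j hj => absurd hj (by omega), ?_⟩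
    show prepend [false] (rsCoding ∘ u) 0 < rsCoding (u (i+0))
    rw [Nat.add_zero, hp0]
    have : rsCoding (u i) = true := by
      cases hc : rsCoding (u i)
      · exact absurd hc hwi
      · rfl
    rw [this]
    decide

lemma occ (h : RSRec u) :
    ∀ j, ∃ k, 1 ≤ k ∧ (∀ q, q < 2^j → u (k+q) = u q) ∧
      u (k-1) = (if j % 2 = 0 then 1 else 2) := by
  intro j
  induction j with
  | zero =>
    refine ⟨2, by omega, ?_, ?_⟩
    · intro q hq
      have hq1 : q = 0 := by simpa using hq
      subst hq1
      show u (2+0) = u 0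
      rw [Nat.add_zero, hu2 h, h.h0]
    · simpa using hu1 h
  | succ j IH =>
    obtain ⟨k, hk1, hpre, hprev⟩ := IH
    refine ⟨2*k, by omega, ?_, ?_⟩
    · intro q hq
      have hq' : q < 2*2^j := by
        have := pow_succ 2 j
        omega
      exact (blocks_eq h (fun q hq => (hpre q hq).symm) q hq').symm
    · rw [show 2*k-1 = 2*(k-1)+1 by omega, h.e1 (k-1), hprev]
      by_cases hj : j % 2 = 0
      · rw [if_pos hj, if_neg (by omega)]
        decide
      · rw [if_neg hj, if_pos (by omega)]
        decide

lemma woc (h : RSRec u) (l : ℕ) :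
    ∃ i, rsCoding (u i) = false ∧ ∀ q, q < l → rsCoding (u (i+1+q)) = rsCoding (u q) := by
  obtain ⟨k, hk1, hpre, hprev⟩ := occ h (2*l+1)
  have hprev2 : u (k-1) = 2 := by
    rw [hprev, if_neg (by omega)]
  refine ⟨2*k-1, ?_, ?_⟩
  · rw [show 2*k-1 = 2*(k-1)+1 by omega, h.e1 (k-1), hprev2]
    decide
  · intro q hq
    have hl : l < 2^(2*l+1) :=
      lt_of_lt_of_le (Nat.lt_two_pow_self (n := l)) (Nat.pow_le_pow_right (by omega) (by omega))
    rw [show 2*k-1+1+q = 2*k+q by omega]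
    exact congrArg rsCoding ((blocks_eq h (fun q hq => (hpre q hq).symm) q (by omega)).symm)

end Stmt17Aux

open Stmt17Aux in
theorem stmt17 (u : ℕ → Fin 4) (hu : IsPureMorphic rsMorph 0 u) :
    InOrbitClosure (prepend [false] (rsCoding ∘ u)) (rsCoding ∘ u) ∧
    ∀ y : ℕ → Bool, InOrbitClosure y (rsCoding ∘ u) →
      LexLe (· < ·) (prepend [false] (rsCoding ∘ u)) y := by
  obtain ⟨h0, hgen, himg⟩ := hu
  -- derive the doubling recurrences
  have hsnoc : ∀ n, wordPrefix u (n+1) = wordPrefix u n ++ [u n] := by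
    intro n
    unfold wordPrefix
    rw [List.ofFn_succ']
    simp only [List.concat_eq_append, Fin.coe_castSucc, Fin.val_last]
  have hL : ∀ n, applyMorphism rsMorph (wordPrefix u (n+1)) =
      applyMorphism rsMorph (wordPrefix u n) ++ [rsF0 (u n), rsF1 (u n)] := by
    intro n
    rw [hsnoc n]
    simp [applyMorphism, rsMorph_eq]
  have hlen : ∀ n, (applyMorphism rsMorph (wordPrefix u n)).length = 2*n := by
    intro n
    induction n with
    | zero => simp [applyMorphism, wordPrefix]
    | succ n ih =>
      rw [hL n]
      simp [ih]
      omega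
  have hget : ∀ n j (hj : j < (applyMorphism rsMorph (wordPrefix u n)).length),
      (applyMorphism rsMorph (wordPrefix u n))[j] = u j := by
    intro n j hj
    have hpre := himg n
    rw [List.getElem_of_eq hpre.symm hj]
    simp [wordPrefix]
  have hrec : RSRec u := by
    refine ⟨h0, ?_, ?_⟩
    · intro k
      have hj : 2*k < (applyMorphism rsMorph (wordPrefix u (k+1))).length := by
        rw [hlen]; omega
      have e := hget (k+1) (2*k) hj
      rw [← e]
      have hjj : 2*k < (applyMorphism rsMorph (wordPrefix u (k+1))).length := hj
      simp only [hL k]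
      rw [List.getElem_append_right (by rw [hlen]) ]
      · simp [hlen]
    · intro k
      have hj : 2*k+1 < (applyMorphism rsMorph (wordPrefix u (k+1))).length := by
        rw [hlen]; omega
      have e := hget (k+1) (2*k+1) hj
      rw [← e]
      simp only [hL k]
      rw [List.getElem_append_right (by rw [hlen]; omega)]
      · simp [hlen]
  have hpS : ∀ j, prepend [false] (rsCoding ∘ u) (j+1) = rsCoding (u j) := by
    intro j
    simp [prepend, Function.comp]
  have hp0 : prepend [false] (rsCoding ∘ u) 0 = false := rfl
  constructor
  · -- part 1 : 0·w is in the orbit closure of w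
    intro z hz
    obtain ⟨a, ha⟩ := isFactor_elim hz
    rcases a with _ | b
    · obtain ⟨i, hi0, hiq⟩ := woc hrec z.length
      apply isFactor_mk _ z i
      intro j hj
      rcases Nat.eq_zero_or_pos j with rfl | hj0
      · have := ha 0 hj
        rw [this]
        show prepend [false] (rsCoding ∘ u) (0+0) = (rsCoding ∘ u) (i+0)
        rw [Nat.add_zero, Nat.add_zero, hp0]
        exact hi0.symm
      · obtain ⟨q, rfl⟩ : ∃ q, j = q+1 := ⟨j-1, by omega⟩
        have := ha (q+1) hj
        rw [this]
        show prepend [false] (rsCoding ∘ u) (0+(q+1)) = (rsCoding ∘ u) (i+(q+1))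
        rw [Nat.zero_add, hpS q]
        have := hiq q (by omega)
        rw [show i+(q+1) = i+1+q by ring]
        exact (hiq q (by omega)).symm
    · apply isFactor_mk _ z b
      intro j hj
      rw [ha j hj, show b+1+j = (b+j)+1 by ring, hpS (b+j)]
      rfl
  · -- part 2 : 0·w is lexicographically least
    intro y hy
    by_cases hYP : ∀ n, y n = prepend [false] (rsCoding ∘ u) n
    · exact Or.inr (funext fun n => (hYP n).symm)
    · left
      push_neg at hYP
      have hne : y (Nat.find hYP) ≠ prepend [false] (rsCoding ∘ u) (Nat.find hYP) :=
        Nat.find_spec hYP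
      set n := Nat.find hYP with hn
      have hmin : ∀ m, m < n → y m = prepend [false] (rsCoding ∘ u) m := by
        intro m hm
        by_contra hc
        exact Nat.find_min hYP hm hc
      have hfy : IsFactor (List.ofFn fun j : Fin (n+1) => y j) y := by
        apply isFactor_mk y _ 0
        intro j hj
        rw [List.getElem_ofFn]
        exact congrArg y (Nat.zero_add j).symm
      obtain ⟨i, hiw⟩ := isFactor_elim (hy _ hfy)
      have hwin : ∀ j, j < n+1 → y j = rsCoding (u (i+j)) := by
        intro j hj
        have hj' : j < (List.ofFn fun j : Fin (n+1) => y j).length := by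
          simpa using hj
        have := hiw j hj'
        rw [List.getElem_ofFn] at this
        exact this
      rcases segle_P hrec (n+1) i with heq | ⟨m, hm, hbef, hstr⟩
      · exfalso
        apply hne
        have h1 := hwin n (by omega)
        have h2 : prepend [false] (rsCoding ∘ u) n = rsCoding (u (i+n)) := heq n (by omega)
        rw [h1, h2]
      · have hmn : m = n := by
          by_contra hne'
          have hm2 : m < n := by omega
          have heqm : y m = prepend [false] (rsCoding ∘ u) m := hmin m hm2
          have hstr' : prepend [false] (rsCoding ∘ u) m < rsCoding (u (i+m)) := hstr
          rw [← hwin m (by omega), heqm] at hstr'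
          exact lt_irrefl _ hstr'
        refine ⟨n, fun q hq => (hmin q hq).symm, ?_⟩
        have hstr' : prepend [false] (rsCoding ∘ u) m < rsCoding (u (i+m)) := hstr
        rw [hmn] at hstr'
        rw [← hwin n (by omega)] at hstr'
        exact hstr'
end
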